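/- arXiv:1807.03829 — 2 statements merged into one kernel-verified Lean document; each statement's English description precedes it below -/
import Mathlib

section
/- Let $R$ be an $n\times n$ real symmetric positive definite matrix, $\lambda_z > 0$, $\tilde R = R + (n/\lambda_z) I_n$, $R_{z} = R - R \tilde R^{-1} R$, $r \in \mathbb{R}^n$, and $r_{z} = r - R\tilde R^{-1} r$. Then $r_{z}^T R_{z}^{-1} = r^T R^{-1}$. -/
open Matrix

theorem sgasp_noiseless_weights (n : ℕ) (hn : 0 < n) (R : Matrix (Fin n) (Fin n) ℝ)
    (hR : R.PosDef) (lamz : ℝ) (hlamz : 0 < lamz) (r : Fin n → ℝ) :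
    Matrix.vecMul
        (r - R.mulVec ((R + ((n : ℝ) / lamz) • (1 : Matrix (Fin n) (Fin n) ℝ))⁻¹.mulVec r))
        (R - R * (R + ((n : ℝ) / lamz) • (1 : Matrix (Fin n) (Fin n) ℝ))⁻¹ * R)⁻¹
      = Matrix.vecMul r R⁻¹ := by
  set c : ℝ := (n : ℝ) / lamz with hc
  have hcpos : 0 < c := div_pos (by exact_mod_cast hn) hlamz
  set T : Matrix (Fin n) (Fin n) ℝ := R + c • (1 : Matrix (Fin n) (Fin n) ℝ) with hT
  have hcI : (c • (1 : Matrix (Fin n) (Fin n) ℝ)).PosDef := by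
    rw [smul_one_eq_diagonal]
    exact Matrix.posDef_diagonal_iff.mpr fun i => hcpos
  have hTpd : T.PosDef := hR.add hcI
  have hRinv : IsUnit R.det := isUnit_iff_ne_zero.mpr hR.det_pos.ne'
  have hTinv : IsUnit T.det := isUnit_iff_ne_zero.mpr hTpd.det_pos.ne'
  have hcomm : R * T = T * R := by
    rw [hT, mul_add, add_mul, Matrix.mul_smul, Matrix.smul_mul, mul_one, one_mul]
  haveI : Invertible T := T.invertibleOfIsUnitDet hTinv
  have hcommI : R * T⁻¹ = T⁻¹ * R := by
    rw [← invOf_eq_nonsing_inv]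
    exact (Commute.invOf_right hcomm : Commute R (⅟T))
  have hTmR : T - R = c • (1 : Matrix (Fin n) (Fin n) ℝ) := by
    rw [hT]; abel
  have hRz : R - R * T⁻¹ * R = c • (R * T⁻¹) := by
    have h1 : R - R * T⁻¹ * R = (T - R) * (T⁻¹ * R) := by
      rw [sub_mul, ← mul_assoc, Matrix.mul_nonsing_inv _ hTinv, one_mul, mul_assoc, ← hcommI,
        ← mul_assoc]
    rw [h1, hTmR, Matrix.smul_mul, one_mul ,hcommI]
  have hrz : r - R.mulVec (T⁻¹.mulVec r) = (c • T⁻¹).mulVec r := by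
    have h2 : r - R.mulVec (T⁻¹.mulVec r) = ((1 : Matrix (Fin n) (Fin n) ℝ) - R * T⁻¹).mulVec r := by
      rw [Matrix.sub_mulVec, Matrix.one_mulVec, Matrix.mulVec_mulVec]
    have h3 : (1 : Matrix (Fin n) (Fin n) ℝ) - R * T⁻¹ = c • T⁻¹ := by
      calc (1 : Matrix (Fin n) (Fin n) ℝ) - R * T⁻¹ = (T - R) * T⁻¹ := by
            rw [sub_mul, Matrix.mul_nonsing_inv _ hTinv]
        _ = c • T⁻¹ := by rw [hTmR, Matrix.smul_mul, one_mul]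
    rw [h2, h3]
  haveI : Invertible c := invertibleOfNonzero hcpos.ne'
  have hRzinv : (R - R * T⁻¹ * R)⁻¹ = c⁻¹ • (T * R⁻¹) := by
    rw [hRz, Matrix.inv_smul, invOf_eq_inv, Matrix.mul_inv_rev,
      Matrix.nonsing_inv_nonsing_inv _ hTinv]
    rw [Matrix.det_mul, Matrix.det_nonsing_inv]
    exact hRinv.mul hTinv.ringInverse
  have hTsymm : (T⁻¹)ᵀ = T⁻¹ := by
    rw [Matrix.transpose_nonsing_inv]
    congr 1
    rw [← Matrix.conjTranspose_eq_transpose_of_trivial]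
    exact hTpd.isHermitian.eq
  rw [hrz, hRzinv, Matrix.vecMul_mulVec, Matrix.transpose_smul, hTsymm,
    Matrix.smul_mul, Matrix.mul_smul, smul_smul, mul_inv_cancel₀ hcpos.ne', one_smul,
    ← mul_assoc, Matrix.nonsing_inv_mul _ hTinv, one_mul]
end

section
/- Let $R$ be an $n\times n$ real symmetric positive definite matrix, $\lambda, \lambda_z > 0$, $\tilde R = R + (n/\lambda_z) I_n$, $R_{z} = R - R \tilde R^{-1} R$, $r \in \mathbb{R}^n$, and $r_z = r - R \tilde R^{-1} r$. Then $r_{z}^T (R_{z} + n\lambda I_n)^{-1} = \frac{1}{1+\lambda\lambda_z}\, r^T \left(R + \frac{n\lambda}{1+\lambda\lambda_z} I_n\right)^{-1}$. -/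
open Matrix

lemma vecMul_smul_right {n : ℕ} (v : Fin n → ℝ) (b : ℝ) (M : Matrix (Fin n) (Fin n) ℝ) :
    Matrix.vecMul v (b • M) = b • Matrix.vecMul v M := by
  ext i
  simp [Matrix.vecMul, dotProduct, Finset.mul_sum, mul_left_comm]

lemma smul_one_posDef {n : ℕ} [NeZero n] {c : ℝ} (hc : 0 < c) :
    (c • (1 : Matrix (Fin n) (Fin n) ℝ)).PosDef := by
  rw [Matrix.smul_one_eq_diagonal]
  exact Matrix.posDef_diagonal_iff.mpr fun _ => hc

theorem sgasp_shrinkage_weights (n : ℕ) (hn : 0 < n) (R : Matrix (Fin n) (Fin n) ℝ)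
    (hR : R.PosDef) (lam lamz : ℝ) (hlam : 0 < lam) (hlamz : 0 < lamz) (r : Fin n → ℝ) :
    Matrix.vecMul
        (r - R.mulVec ((R + ((n : ℝ) / lamz) • (1 : Matrix (Fin n) (Fin n) ℝ))⁻¹.mulVec r))
        ((R - R * (R + ((n : ℝ) / lamz) • (1 : Matrix (Fin n) (Fin n) ℝ))⁻¹ * R)
          + ((n : ℝ) * lam) • (1 : Matrix (Fin n) (Fin n) ℝ))⁻¹
      = (1 / (1 + lam * lamz)) • Matrix.vecMul r
          (R + ((n : ℝ) * lam / (1 + lam * lamz)) • (1 : Matrix (Fin n) (Fin n) ℝ))⁻¹ := by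
  have : NeZero n := ⟨hn.ne'⟩
  have hnR : (0:ℝ) < n := by exact_mod_cast hn
  set c : ℝ := (n : ℝ) / lamz with hc_def
  have hc : 0 < c := div_pos hnR hlamz
  set T : Matrix (Fin n) (Fin n) ℝ := R + c • 1 with hT_def
  have hT : T.PosDef := hR.add (smul_one_posDef hc)
  have hTu : IsUnit T.det := isUnit_iff_isUnit_det _ |>.mp hT.isUnit
  set Q : Matrix (Fin n) (Fin n) ℝ :=
    R + ((n : ℝ) * lam / (1 + lam * lamz)) • 1 with hQ_def
  have hden : 0 < 1 + lam * lamz := by positivity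
  have hQ : Q.PosDef := hR.add (smul_one_posDef (by positivity))
  have hQu : IsUnit Q.det := isUnit_iff_isUnit_det _ |>.mp hQ.isUnit
  set S : Matrix (Fin n) (Fin n) ℝ := (c + n * lam) • Q with hS_def
  have hcn : 0 < c + n * lam := by positivity
  -- commuting facts
  have hRT : R * T = T * R := by
    simp only [hT_def, mul_add, add_mul, Matrix.mul_smul, Matrix.smul_mul,
      Matrix.mul_one, Matrix.one_mul]
  have hRTinv : R * T⁻¹ = T⁻¹ * R := by
    calc R * T⁻¹ = T⁻¹ * (T * R) * T⁻¹ := by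
          rw [← Matrix.mul_assoc, Matrix.nonsing_inv_mul _ hTu, Matrix.one_mul]
      _ = T⁻¹ * R * (T * T⁻¹) := by rw [← hRT]; noncomm_ring
      _ = T⁻¹ * R := by rw [Matrix.mul_nonsing_inv _ hTu, Matrix.mul_one]
  set M : Matrix (Fin n) (Fin n) ℝ :=
    (R - R * T⁻¹ * R) + ((n : ℝ) * lam) • 1 with hM_def
  have hscal : (c + n * lam) * ((n : ℝ) * lam / (1 + lam * lamz)) = (n : ℝ) * lam * c := by
    rw [hc_def]
    field_simp
  have hMT : M * T = S := by
    have h1 : R * T⁻¹ * R * T = R * R := by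
      calc R * T⁻¹ * R * T = R * T⁻¹ * (R * T) := by rw [Matrix.mul_assoc]
        _ = R * (T⁻¹ * T) * R := by rw [hRT]; noncomm_ring
        _ = R * R := by rw [Matrix.nonsing_inv_mul _ hTu, Matrix.mul_one]
    rw [hM_def, hS_def, hQ_def]
    rw [Matrix.add_mul, Matrix.sub_mul, h1]
    rw [hT_def]
    simp only [smul_add, smul_smul, hscal, mul_add, add_mul, Matrix.mul_smul,
      Matrix.smul_mul, Matrix.mul_one, Matrix.one_mul]
    module
  have hM_eq : M = S * T⁻¹ := by
    rw [← hMT, Matrix.mul_assoc, Matrix.mul_nonsing_inv _ hTu, Matrix.mul_one]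
  haveI : Invertible (c + n * lam) := invertibleOfNonzero hcn.ne'
  have hSinv : S⁻¹ = (c + n * lam)⁻¹ • Q⁻¹ := by
    rw [hS_def, Matrix.inv_smul (A := Q) (k := c + (n:ℝ) * lam) hQu, invOf_eq_inv]
  have hMinv : M⁻¹ = T * S⁻¹ := by
    rw [hM_eq, Matrix.mul_inv_rev, Matrix.nonsing_inv_nonsing_inv _ hTu]
  -- rewrite the vector
  have hRsym : Rᵀ = R := by
    have := hR.isHermitian
    rwa [Matrix.IsHermitian, Matrix.conjTranspose_eq_transpose_of_trivial] at this
  have hTsym : Tᵀ = T := by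
    rw [hT_def, Matrix.transpose_add, hRsym, Matrix.transpose_smul, Matrix.transpose_one]
  have hvec : r - R.mulVec (T⁻¹.mulVec r) = Matrix.vecMul r (c • T⁻¹) := by
    have h2 : R.mulVec (T⁻¹.mulVec r) = Matrix.vecMul r (T⁻¹ * R) := by
      rw [Matrix.mulVec_mulVec, hRTinv, ← Matrix.mulVec_transpose,
        Matrix.transpose_mul, hRsym, Matrix.transpose_nonsing_inv, hTsym, hRTinv]
    have h3 : (1 : Matrix (Fin n) (Fin n) ℝ) - T⁻¹ * R = c • T⁻¹ := by
      have : T⁻¹ * T - T⁻¹ * R = T⁻¹ * (c • 1) := by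
        rw [← Matrix.mul_sub, hT_def]; congr 1; abel
      rw [← Matrix.nonsing_inv_mul _ hTu, this, Matrix.mul_smul, Matrix.mul_one]
    rw [h2, ← h3, Matrix.vecMul_sub, Matrix.vecMul_one]
  rw [hvec, Matrix.vecMul_vecMul, hMinv, Matrix.smul_mul, ← Matrix.mul_assoc,
    Matrix.nonsing_inv_mul _ hTu, Matrix.one_mul, hSinv, smul_smul,
    vecMul_smul_right]
  congr 1
  rw [hc_def]
  field_simp
end
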